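/- Let R be a commutative ring, A a commutative R-algebra, and F : ℕ → Submodule R A a multiplicative exhaustive filtration: 1 ∈ F 0, F is monotone, F i * F j ≤ F (i+j), and every element of A lies in some F d. Let s be a natural number, M an A-submodule of Fin s → A, with induced filtration M_{≤d} := {m ∈ M | m i ∈ F d for all i}. Define ^hM := {p : Fin s → Polynomial A | ∀ d, (fun i => (p i).coeff d) ∈ M_{≤d}}. Then the componentwise evaluation-at-1 map ^hM → M, p ↦ (fun i => Polynomial.eval 1 (p i)), is surjective, and its kernel equals (X − 1) • ^hM := {q : Fin s → Polynomial A | ∃ q' ∈ ^hM, q i = (X − 1) * q' i for all i}. -/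

import Mathlib

/-- Let `F` be a multiplicative exhaustive filtration of a commutative
`R`-algebra `A`, `M` an `A`-submodule of `Fin s → A` with induced filtration
`M_{≤d} = {m ∈ M | ∀ i, m i ∈ F d}`, and
`^hM = {p : Fin s → A[X] | ∀ d, the tuple of degree-d coefficients lies in M_{≤d}}`.
Then componentwise evaluation at 1 maps `^hM` onto `M`, and its kernel is
`(X − 1) • ^hM`. -/
theorem stmt_11 {R A : Type*} [CommRing R] [CommRing A] [Algebra R A]
    (F : ℕ → Submodule R A) (h1 : (1 : A) ∈ F 0) (hmono : ∀ d, F d ≤ F (d + 1))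
    (hmul : ∀ i j, F i * F j ≤ F (i + j)) (hexh : ∀ a : A, ∃ d, a ∈ F d)
    (s : ℕ) (M : Submodule A (Fin s → A)) :
    let hM : Set (Fin s → Polynomial A) :=
      {p | ∀ d, ((fun i => (p i).coeff d) : Fin s → A) ∈ M ∧ ∀ i, (p i).coeff d ∈ F d}
    (∀ p ∈ hM, ((fun i => Polynomial.eval 1 (p i)) : Fin s → A) ∈ M) ∧
    (∀ m ∈ M, ∃ p ∈ hM, ∀ i, Polynomial.eval 1 (p i) = m i) ∧
    (∀ p ∈ hM, ((∀ i, Polynomial.eval 1 (p i) = 0) ↔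
      ∃ q ∈ hM, ∀ i, p i = (Polynomial.X - 1) * q i)) := by
  intro hM
  have Fmono : ∀ {i j : ℕ}, i ≤ j → F i ≤ F j := fun {i j} h =>
    monotone_nat_of_le_succ (fun n => hmono n) h
  refine ⟨?_, ?_, ?_⟩
  · intro p hp
    obtain ⟨N, hN⟩ : ∃ N, ∀ i, (p i).natDegree < N :=
      ⟨(Finset.univ.sup fun i => (p i).natDegree) + 1, fun i =>
        Nat.lt_succ_of_le (Finset.le_sup (f := fun i => (p i).natDegree) (Finset.mem_univ i))⟩
    have key : (fun i => Polynomial.eval 1 (p i)) =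
        ∑ e ∈ Finset.range N, (fun i => (p i).coeff e) := by
      funext i
      simp only [Finset.sum_apply]
      rw [Polynomial.eval_eq_sum_range' (hN i)]
      simp
    rw [key]
    exact Submodule.sum_mem M fun e _ => (hp e).1
  · intro m hm
    obtain ⟨D, hD⟩ : ∃ D, ∀ i, m i ∈ F D := by
      choose f hf using fun i => hexh (m i)
      exact ⟨Finset.univ.sup f, fun i =>
        Fmono (Finset.le_sup (Finset.mem_univ i)) (hf i)⟩
    refine ⟨fun i => Polynomial.C (m i) * Polynomial.X ^ D, fun d => ?_, fun i => by simp⟩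
    by_cases h : d = D
    · subst h
      refine ⟨?_, fun i => ?_⟩
      · simpa [Polynomial.coeff_C_mul, Polynomial.coeff_X_pow] using hm
      · simpa [Polynomial.coeff_C_mul, Polynomial.coeff_X_pow] using hD i
    · refine ⟨?_, fun i => ?_⟩
      · have : (fun i => (Polynomial.C (m i) * Polynomial.X ^ D).coeff d)
            = (0 : Fin s → A) := by
          funext i
          simp [Polynomial.coeff_C_mul, Polynomial.coeff_X_pow, h]
        rw [this]; exact Submodule.zero_mem M
      · simp [Polynomial.coeff_C_mul, Polynomial.coeff_X_pow, h]
  · intro p hp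
    constructor
    · intro h0
      set q : Fin s → Polynomial A := fun i => (p i) /ₘ (Polynomial.X - Polynomial.C 1)
        with hqdef
      have hfac : ∀ i, p i = (Polynomial.X - 1) * q i := by
        intro i
        have h := Polynomial.modByMonic_add_div (p i) (Polynomial.X - Polynomial.C (1 : A))
        rw [Polynomial.modByMonic_X_sub_C_eq_C_eval, h0 i, map_zero, zero_add] at h
        rw [hqdef]
        simpa [Polynomial.C_1] using h.symm
      have hcoeff : ∀ i d, (q i).coeff d = -∑ e ∈ Finset.range (d + 1), (p i).coeff e := by
        intro i d
        induction d with
        | zero =>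
          have h := congrArg (fun r => r.coeff 0) (hfac i)
          simp only [sub_mul, one_mul, Polynomial.coeff_sub, Polynomial.mul_coeff_zero,
            Polynomial.coeff_X_zero, zero_mul] at h
          simp only [zero_add, Finset.range_one, Finset.sum_singleton]
          linear_combination h
        | succ d ih =>
          have h := congrArg (fun r => r.coeff (d + 1)) (hfac i)
          simp only [sub_mul, one_mul, Polynomial.coeff_sub,
            Polynomial.coeff_X_mul] at h
          rw [Finset.sum_range_succ, neg_add, ← ih]
          linear_combination h
      refine ⟨q, fun d => ⟨?_, fun i => ?_⟩, hfac⟩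
      · have : (fun i => (q i).coeff d)
            = -∑ e ∈ Finset.range (d + 1), (fun i => (p i).coeff e) := by
          funext i
          simp [hcoeff, Finset.sum_apply]
        rw [this]
        exact Submodule.neg_mem M (Submodule.sum_mem M fun e _ => (hp e).1)
      · rw [hcoeff]
        exact Submodule.neg_mem _ (Submodule.sum_mem _ fun e he =>
          Fmono (Nat.lt_succ_iff.mp (Finset.mem_range.mp he)) ((hp e).2 i))
    · rintro ⟨q, hqM, hfac⟩ i
      rw [hfac i]
      simp
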